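/- For the Veronese sequence, the odd-indexed subsequence 1/2, 3/7, 11/26, 41/97, 153/362, ... satisfies: its terms p_m/q_m obey p_{m+1} = 4p_m − p_{m−1} and q_{m+1} = 4q_m − q_{m−1} with (p_0,q_0) = (1,2), (p_1,q_1) = (3,7), and converges to 1 − 1/√3. -/

import Mathlib

open Filter Topology

/-- The Veronese sequence over `ℝ`: `α 0 = 1`, `α (i+1) = 2 - α i` for `i` odd, and
`α (i+1) = α i / (3 α i - 1)` for `i` even. -/
noncomputable def veronese : ℕ → ℝ
  | 0 => 1
  | (i + 1) => if Odd i then 2 - veronese i else veronese i / (3 * veronese i - 1)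

/-- Numerators of the odd-indexed terms: `p 0 = 1`, `p 1 = 3`, `p (m+2) = 4 p (m+1) - p m`. -/
def oddNum : ℕ → ℤ
  | 0 => 1
  | 1 => 3
  | (m + 2) => 4 * oddNum (m + 1) - oddNum m

/-- Denominators of the odd-indexed terms: `q 0 = 2`, `q 1 = 7`, `q (m+2) = 4 q (m+1) - q m`. -/
def oddDen : ℕ → ℤ
  | 0 => 2
  | 1 => 7
  | (m + 2) => 4 * oddDen (m + 1) - oddDen m

lemma oddNum_add2 (m : ℕ) : oddNum (m + 2) = 4 * oddNum (m + 1) - oddNum m := rfl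
lemma oddDen_add2 (m : ℕ) : oddDen (m + 2) = 4 * oddDen (m + 1) - oddDen m := rfl

lemma coupled (m : ℕ) : oddNum (m + 1) = 2 * oddDen m - oddNum m ∧
    oddDen (m + 1) = 5 * oddDen m - 3 * oddNum m := by
  induction m using Nat.twoStepInduction with
  | zero => decide
  | one => decide
  | more m ih1 ih2 =>
    obtain ⟨a1, a2⟩ := ih1
    obtain ⟨b1, b2⟩ := ih2
    have e1 := oddNum_add2 m
    have e2 := oddDen_add2 m
    have e3 := oddNum_add2 (m + 1)
    have e4 := oddDen_add2 (m + 1)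
    have e5 : oddNum (m + 2 + 1) = oddNum (m + 1 + 2) := rfl
    have e6 : oddDen (m + 2 + 1) = oddDen (m + 1 + 2) := rfl
    constructor <;> omega

lemma posfacts (m : ℕ) : 1 ≤ oddNum m ∧ 2 * oddNum m ≤ oddDen m := by
  induction m with
  | zero => decide
  | succ m ih =>
    obtain ⟨h1, h2⟩ := ih
    obtain ⟨c1, c2⟩ := coupled m
    constructor <;> omega

lemma den_pos (m : ℕ) : 0 < (oddDen m : ℝ) := by
  obtain ⟨h1, h2⟩ := posfacts m
  have : (0 : ℤ) < oddDen m := by omega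
  exact_mod_cast this

lemma veronese_odd (m : ℕ) : veronese (2 * m + 1) = (oddNum m : ℝ) / (oddDen m : ℝ) := by
  induction m with
  | zero =>
    show veronese 1 = _
    simp [veronese, oddNum, oddDen]
    norm_num
  | succ m ih =>
    obtain ⟨h1, h2⟩ := posfacts m
    obtain ⟨c1, c2⟩ := coupled m
    have hq : (0 : ℝ) < (oddDen m : ℝ) := den_pos m
    have hq0 : (oddDen m : ℝ) ≠ 0 := ne_of_gt hq
    have h5 : (0 : ℝ) < 5 * (oddDen m : ℝ) - 3 * (oddNum m : ℝ) := by
      have : (0 : ℤ) < 5 * oddDen m - 3 * oddNum m := by omega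
      exact_mod_cast this
    have h50 : (5 : ℝ) * (oddDen m : ℝ) - 3 * (oddNum m : ℝ) ≠ 0 := ne_of_gt h5
    have e1 : veronese (2 * m + 2) = 2 - veronese (2 * m + 1) := by
      show veronese ((2 * m + 1) + 1) = _
      rw [veronese]
      simp [Nat.odd_add_one, Nat.even_add_one, parity_simps]
    have e2 : veronese (2 * (m + 1) + 1) =
        veronese (2 * m + 2) / (3 * veronese (2 * m + 2) - 1) := by
      show veronese ((2 * m + 2) + 1) = _
      rw [veronese]
      simp [parity_simps]
    have hc : (3 : ℝ) * (2 - (oddNum m : ℝ) / (oddDen m : ℝ)) - 1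
        = (5 * (oddDen m : ℝ) - 3 * (oddNum m : ℝ)) / (oddDen m : ℝ) := by
      field_simp; ring
    rw [e2, e1, ih, c1, c2, hc]
    push_cast
    rw [div_div_eq_mul_div]
    rw [div_eq_div_iff (by positivity) h50]
    field_simp

lemma sqrt3_sq : Real.sqrt 3 ^ 2 = 3 := Real.sq_sqrt (by norm_num)

lemma sqrt3_ge : (1 : ℝ) ≤ Real.sqrt 3 := by
  nlinarith [sqrt3_sq, Real.sqrt_nonneg 3]

lemma sqrt3_le : Real.sqrt 3 ≤ 2 := by
  nlinarith [sqrt3_sq, Real.sqrt_nonneg 3]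

lemma L_root : 3 * (1 - 1 / Real.sqrt 3) ^ 2 - 6 * (1 - 1 / Real.sqrt 3) + 2 = 0 := by
  have h0 : Real.sqrt 3 ≠ 0 := by positivity
  field_simp
  nlinarith [sqrt3_sq]

lemma abound (m : ℕ) :
    |(oddNum m : ℝ) / (oddDen m : ℝ) - (1 - 1 / Real.sqrt 3)| ≤ (1 / 4 : ℝ) ^ m := by
  have h0 : (0:ℝ) < Real.sqrt 3 := by linarith [sqrt3_ge]
  have hd1 : 1 / Real.sqrt 3 ≤ 1 := by rw [div_le_one h0]; exact sqrt3_ge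
  have hd0 : (0:ℝ) ≤ 1 / Real.sqrt 3 := by positivity
  have hi1 : (Real.sqrt 3)⁻¹ ≤ 1 := by rw [← one_div]; exact hd1
  have hi0 : (0:ℝ) ≤ (Real.sqrt 3)⁻¹ := by rw [← one_div]; exact hd0
  set L : ℝ := 1 - 1 / Real.sqrt 3 with hLdef
  have hL0 : 0 ≤ L := by rw [hLdef]; linarith
  have hL1 : L ≤ 1 := by rw [hLdef]; linarith
  induction m with
  | zero =>
    simp only [oddNum, oddDen, pow_zero]
    rw [abs_le]
    push_cast
    constructor <;> [rw [hLdef]; rw [hLdef]] <;> norm_num <;> linarith [hi0, hi1]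
  | succ m ih =>
    obtain ⟨h1, h2⟩ := posfacts m
    obtain ⟨c1, c2⟩ := coupled m
    have hq : (0 : ℝ) < (oddDen m : ℝ) := den_pos m
    set a : ℝ := (oddNum m : ℝ) / (oddDen m : ℝ) with ha
    have hap : 0 < a := by
      apply div_pos _ hq
      have : (0:ℤ) < oddNum m := by omega
      exact_mod_cast this
    have hah : a ≤ 1 / 2 := by
      rw [ha, div_le_div_iff₀ hq (by norm_num)]
      have h2' : (oddNum m : ℝ) * 2 ≤ (oddDen m : ℝ) := by exact_mod_cast (by omega : oddNum m * 2 ≤ oddDen m)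
      linarith
    have h5a : (0:ℝ) < 5 - 3 * a := by linarith
    have h5L : (2:ℝ) ≤ 5 - 3 * L := by linarith
    have hQ : (0:ℝ) < 5 * (oddDen m : ℝ) - 3 * (oddNum m : ℝ) := by
      exact_mod_cast (by omega : (0:ℤ) < 5 * oddDen m - 3 * oddNum m)
    have hnext : (oddNum (m+1) : ℝ) / (oddDen (m+1) : ℝ) = (2 - a) / (5 - 3 * a) := by
      rw [c1, c2]
      push_cast
      rw [div_eq_div_iff (ne_of_gt hQ) (ne_of_gt h5a), ha]
      field_simp
    have hroot := L_root
    rw [← hLdef] at hroot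
    have hp : (0:ℝ) < (5 - 3 * a) * (5 - 3 * L) := mul_pos h5a (by linarith)
    have key2 : ((2 - a) - L * (5 - 3 * a)) * (5 - 3 * L) = a - L := by
      linear_combination (5 - 3 * a) * hroot
    have key : (2 - a) / (5 - 3 * a) - L = (a - L) / ((5 - 3 * a) * (5 - 3 * L)) := by
      have e : (2 - a) / (5 - 3 * a) - L = ((2 - a) - L * (5 - 3 * a)) / (5 - 3 * a) := by
        rw [eq_div_iff (ne_of_gt h5a), sub_mul, div_mul_cancel₀ _ (ne_of_gt h5a)]
      rw [e, div_eq_div_iff (ne_of_gt h5a) (ne_of_gt hp)]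
      linear_combination (5 - 3 * a) * key2
    rw [hnext, key, abs_div, abs_of_pos (by positivity : (0:ℝ) < (5 - 3*a)*(5-3*L))]
    have hprod : (4:ℝ) ≤ (5 - 3 * a) * (5 - 3 * L) := by nlinarith
    calc |a - L| / ((5 - 3*a)*(5-3*L)) ≤ |a - L| / 4 := by
          gcongr
      _ ≤ (1/4:ℝ)^m / 4 := by gcongr
      _ = (1/4:ℝ)^(m+1) := by ring

/-- The odd-indexed subsequence `1/2, 3/7, 11/26, 41/97, 153/362, …` of the Veronese
sequence is `p m / q m` where the numerators and denominators satisfy the second-order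
recursion `u (m+2) = 4 u (m+1) - u m` with the indicated initial values, and the
subsequence converges to `1 - 1/√3`. -/
theorem veronese_odd_subsequence :
    (∀ m : ℕ, veronese (2 * m + 1) = (oddNum m : ℝ) / (oddDen m : ℝ)) ∧
    Tendsto (fun m => veronese (2 * m + 1)) atTop (𝓝 (1 - 1 / Real.sqrt 3)) := by
  refine ⟨veronese_odd, ?_⟩
  rw [tendsto_iff_dist_tendsto_zero]
  have h4 : Tendsto (fun m : ℕ => (1/4:ℝ)^m) atTop (𝓝 0) :=
    tendsto_pow_atTop_nhds_zero_of_lt_one (by norm_num) (by norm_num)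
  exact squeeze_zero (fun m => dist_nonneg)
    (fun m => by rw [Real.dist_eq, veronese_odd]; exact abound m) h4
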